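/- arXiv:1112.1436 — 2 statements merged into one kernel-verified Lean document; each statement's English description precedes it below -/
import Mathlib

section
/- Let Z = I_r ⊕ 0 ∈ S^n₊. For every V ∈ cl dir(Z, S^n₊) \ dir(Z, S^n₊) there exists an invertible n×n matrix T = Q ⊕ P, with Q an r×r orthogonal matrix and P an (n−r)×(n−r) invertible matrix, such that Tᵀ V T, partitioned with block sizes r, 1, n−r−1, has the form [[V₁₁, e₁, V₁₃], [e₁ᵀ, 0, 0], [V₁₃ᵀ, 0, V₃₃]], where V₁₁ is an r×r symmetric matrix, e₁ ∈ ℝ^r is the first standard unit vector, V₃₃ is positive semidefinite (possibly an empty matrix), and V₁₃ is arbitrary. -/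
open Matrix

noncomputable section

/-- The set of feasible directions at `Z` in a set `C` of matrices. -/
def dirMat {n : ℕ} (Z : Matrix (Fin n) (Fin n) ℝ)
    (C : Set (Matrix (Fin n) (Fin n) ℝ)) : Set (Matrix (Fin n) (Fin n) ℝ) :=
  {V | ∃ ε : ℝ, 0 < ε ∧ Z + ε • V ∈ C}

/-- The cone of positive semidefinite `n × n` real matrices. -/
def PSDCone (n : ℕ) : Set (Matrix (Fin n) (Fin n) ℝ) := {M | M.PosSemidef}

/-- The block matrix `I_r ⊕ 0` of size `n × n`. -/
def ZMat (n r : ℕ) : Matrix (Fin n) (Fin n) ℝ :=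
  fun i j => if i = j ∧ (i : ℕ) < r then 1 else 0

/-- `T = Q ⊕ P` is block diagonal with block sizes `r` and `n - r`, the upper-left block `Q`
is orthogonal, and `T` is invertible (hence `P` is invertible). -/
def BlockRotation {n : ℕ} (r : ℕ) (T : Matrix (Fin n) (Fin n) ℝ) : Prop :=
  IsUnit T.det ∧
  (∀ i j : Fin n, (((i : ℕ) < r ∧ r ≤ (j : ℕ)) ∨ ((j : ℕ) < r ∧ r ≤ (i : ℕ))) → T i j = 0) ∧
  (∀ j k : Fin n, (j : ℕ) < r → (k : ℕ) < r →
    (∑ i, T i j * T i k) = if j = k then 1 else 0)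

/-- `V` has the form `[[V₁₁, e₁, *], [e₁ᵀ, 0, 0], [*, 0, V₃₃]]` (block sizes `r`, `1`,
`n - r - 1`) with `V₃₃` positive semidefinite. -/
def VForm {n : ℕ} (r : ℕ) (V : Matrix (Fin n) (Fin n) ℝ) : Prop :=
  V.IsSymm ∧
  (∀ i j : Fin n, (i : ℕ) < r → (j : ℕ) = r → V i j = if (i : ℕ) = 0 then 1 else 0) ∧
  (∀ i j : Fin n, (i : ℕ) = r → r ≤ (j : ℕ) → V i j = 0) ∧
  (∀ x : Fin n → ℝ, (∀ i : Fin n, (i : ℕ) ≤ r → x i = 0) → 0 ≤ x ⬝ᵥ (V *ᵥ x))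

namespace FrontierAux


variable {n r : ℕ}

/-- lower mask of a vector -/
def lowv (r : ℕ) (x : Fin n → ℝ) : Fin n → ℝ := fun i => if r ≤ (i : ℕ) then x i else 0
/-- upper mask of a vector -/
def upv (r : ℕ) (x : Fin n → ℝ) : Fin n → ℝ := fun i => if (i : ℕ) < r then x i else 0

lemma upv_add_lowv (r : ℕ) (x : Fin n → ℝ) : upv r x + lowv r x = x := by
  funext i
  simp only [upv, lowv, Pi.add_apply]
  by_cases h : (i : ℕ) < r
  · simp [h, Nat.not_le.mpr h]
  · simp [h, Nat.le_of_not_lt h]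

lemma lowv_lowv (r : ℕ) (x : Fin n → ℝ) : lowv r (lowv r x) = lowv r x := by
  funext i; simp only [lowv]; split <;> simp_all

lemma dot_upv_lowv (r : ℕ) (x y : Fin n → ℝ) : upv r x ⬝ᵥ lowv r y = 0 := by
  unfold dotProduct upv lowv
  apply Finset.sum_eq_zero
  intro i _
  by_cases h : (i : ℕ) < r
  · simp [h, Nat.not_le.mpr h]
  · simp [h]

lemma upv_eq_self {r : ℕ} {x : Fin n → ℝ} (h : ∀ i : Fin n, r ≤ (i : ℕ) → x i = 0) :
    upv r x = x := by
  funext i; simp only [upv]; split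
  · rfl
  · exact (h i (Nat.le_of_not_lt (by assumption))).symm

lemma lowv_eq_self {r : ℕ} {x : Fin n → ℝ} (h : ∀ i : Fin n, (i : ℕ) < r → x i = 0) :
    lowv r x = x := by
  funext i; simp only [lowv]; split
  · rfl
  · exact (h i (Nat.lt_of_not_le (by assumption))).symm

lemma lowv_apply_low {r : ℕ} (x : Fin n → ℝ) {i : Fin n} (h : (i : ℕ) < r) :
    lowv r x i = 0 := by simp [lowv, Nat.not_le.mpr h]

lemma upv_apply_high {r : ℕ} (x : Fin n → ℝ) {i : Fin n} (h : r ≤ (i : ℕ)) :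
    upv r x i = 0 := by simp [upv, Nat.not_lt.mpr h]

/-- `Z *ᵥ x = upv r x` -/
lemma ZMat_mulVec (r : ℕ) (x : Fin n → ℝ) :
    (fun i j => if i = j ∧ (i : ℕ) < r then (1:ℝ) else 0 : Matrix (Fin n) (Fin n) ℝ) *ᵥ x
      = upv r x := by
  funext i
  simp only [mulVec, dotProduct, upv]
  by_cases h : (i : ℕ) < r
  · rw [Finset.sum_eq_single i]
    · simp [h]
    · intro b _ hb; simp [Ne.symm hb]
    · simp
  · rw [if_neg h]
    apply Finset.sum_eq_zero
    intro j _
    simp [h]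



variable {n r : ℕ}

lemma ZMat_transpose (n r : ℕ) : (ZMat n r)ᵀ = ZMat n r := by
  funext i j
  simp only [transpose_apply, ZMat]
  by_cases h : i = j
  · subst h; rfl
  · simp [h, Ne.symm h]

lemma continuous_entry (i j : Fin n) :
    Continuous fun M : Matrix (Fin n) (Fin n) ℝ => M i j :=
  (continuous_apply j).comp (continuous_apply i)

lemma isSymm_of_mem_closure {V : Matrix (Fin n) (Fin n) ℝ}
    (h : V ∈ closure (dirMat (ZMat n r) (PSDCone n))) : V.IsSymm := by
  have hclosed : IsClosed {M : Matrix (Fin n) (Fin n) ℝ | M.IsSymm} := by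
    have : {M : Matrix (Fin n) (Fin n) ℝ | M.IsSymm} =
        ⋂ i, ⋂ j, {M : Matrix (Fin n) (Fin n) ℝ | M j i = M i j} := by
      ext M
      simp only [Set.mem_setOf_eq, Set.mem_iInter, Matrix.IsSymm]
      constructor
      · intro hM i j; exact congrFun (congrFun hM i) j
      · intro hM; funext i j; exact hM i j
    rw [this]
    exact isClosed_iInter fun i => isClosed_iInter fun j =>
      isClosed_eq (continuous_entry j i) (continuous_entry i j)
  have hsub : dirMat (ZMat n r) (PSDCone n) ⊆ {M : Matrix (Fin n) (Fin n) ℝ | M.IsSymm} := by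
    rintro M ⟨ε, hε, hM⟩
    have hherm : (ZMat n r + ε • M).IsHermitian := hM.1
    have : (ZMat n r + ε • M)ᵀ = ZMat n r + ε • M := hherm
    rw [transpose_add, transpose_smul, ZMat_transpose] at this
    have h2 : ε • Mᵀ = ε • M := by
      have := congrArg (fun A => A - ZMat n r) this
      simpa [add_sub_cancel_left] using this
    show Mᵀ = M
    have := congrArg (fun A => ε⁻¹ • A) h2
    simpa [smul_smul, inv_mul_cancel₀ hε.ne'] using this
  exact closure_minimal hsub hclosed h

lemma low_psd_of_mem_closure {V : Matrix (Fin n) (Fin n) ℝ}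
    (h : V ∈ closure (dirMat (ZMat n r) (PSDCone n))) :
    ∀ x : Fin n → ℝ, (∀ i : Fin n, (i : ℕ) < r → x i = 0) → 0 ≤ x ⬝ᵥ (V *ᵥ x) := by
  intro x hx
  have hcont : Continuous fun M : Matrix (Fin n) (Fin n) ℝ => x ⬝ᵥ (M *ᵥ x) := by
    unfold dotProduct mulVec
    apply continuous_finset_sum
    intro i _
    exact continuous_const.mul (continuous_finset_sum _ fun j _ =>
      ((continuous_entry i j).mul continuous_const))
  have hclosed : IsClosed {M : Matrix (Fin n) (Fin n) ℝ | 0 ≤ x ⬝ᵥ (M *ᵥ x)} :=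
    isClosed_le continuous_const hcont
  have hsub : dirMat (ZMat n r) (PSDCone n) ⊆ {M | 0 ≤ x ⬝ᵥ (M *ᵥ x)} := by
    rintro M ⟨ε, hε, hM⟩
    have h0 : (0:ℝ) ≤ x ⬝ᵥ ((ZMat n r + ε • M) *ᵥ x) := by
      have := hM.dotProduct_mulVec_nonneg x
      simpa using this
    have hZ : x ⬝ᵥ ((ZMat n r) *ᵥ x) = 0 := by
      have hmul : (ZMat n r) *ᵥ x = 0 := by
        funext i
        simp only [mulVec, dotProduct, Pi.zero_apply, ZMat]
        apply Finset.sum_eq_zero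
        intro j _
        by_cases hij : i = j ∧ (i : ℕ) < r
        · obtain ⟨rfl, hlt⟩ := hij
          rw [if_pos ⟨rfl, hlt⟩, one_mul]
          exact hx _ hlt
        · simp [hij]
      rw [hmul, dotProduct_zero]
    rw [add_mulVec, dotProduct_add, hZ, zero_add, smul_mulVec,
      dotProduct_smul] at h0
    exact (mul_le_mul_iff_right₀ hε).mp (by simpa using h0)
  exact closure_minimal hsub hclosed h




/-- lower-right block of `V`, embedded in the full space -/
def Wmat (r : ℕ) (V : Matrix (Fin n) (Fin n) ℝ) : Matrix (Fin n) (Fin n) ℝ :=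
  fun i j => if r ≤ (i : ℕ) ∧ r ≤ (j : ℕ) then V i j else 0

/-- upper-right block of `V`, embedded in the full space -/
def Lmat (r : ℕ) (V : Matrix (Fin n) (Fin n) ℝ) : Matrix (Fin n) (Fin n) ℝ :=
  fun i j => if (i : ℕ) < r ∧ r ≤ (j : ℕ) then V i j else 0

lemma Wmat_mulVec (V : Matrix (Fin n) (Fin n) ℝ) (x : Fin n → ℝ) :
    Wmat r V *ᵥ x = lowv r (V *ᵥ lowv r x) := by
  funext i
  simp only [Wmat, mulVec, dotProduct, lowv]
  by_cases hi : r ≤ (i : ℕ)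
  · rw [if_pos hi]
    apply Finset.sum_congr rfl
    intro j _
    by_cases hj : r ≤ (j : ℕ) <;> simp [hi, hj]
  · rw [if_neg hi]
    apply Finset.sum_eq_zero
    intro j _
    simp [hi]

lemma Lmat_mulVec (V : Matrix (Fin n) (Fin n) ℝ) (x : Fin n → ℝ) :
    Lmat r V *ᵥ x = upv r (V *ᵥ lowv r x) := by
  funext i
  simp only [Lmat, mulVec, dotProduct, upv, lowv]
  by_cases hi : (i : ℕ) < r
  · rw [if_pos hi]
    apply Finset.sum_congr rfl
    intro j _
    by_cases hj : r ≤ (j : ℕ) <;> simp [hi, hj]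
  · rw [if_neg hi]
    apply Finset.sum_eq_zero
    intro j _
    simp [hi]

lemma dot_lowv (x y : Fin n → ℝ) : x ⬝ᵥ lowv r y = lowv r x ⬝ᵥ y := by
  unfold dotProduct lowv
  apply Finset.sum_congr rfl
  intro i _
  by_cases h : r ≤ (i : ℕ) <;> simp [h]

lemma dot_upv (x y : Fin n → ℝ) : x ⬝ᵥ upv r y = upv r x ⬝ᵥ y := by
  unfold dotProduct upv
  apply Finset.sum_congr rfl
  intro i _
  by_cases h : (i : ℕ) < r <;> simp [h]

lemma Wmat_posSemidef {V : Matrix (Fin n) (Fin n) ℝ} (hsym : V.IsSymm)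
    (hlow : ∀ x : Fin n → ℝ, (∀ i : Fin n, (i : ℕ) < r → x i = 0) → 0 ≤ x ⬝ᵥ (V *ᵥ x)) :
    (Wmat r V).PosSemidef := by
  refine Matrix.PosSemidef.of_dotProduct_mulVec_nonneg ?_ ?_
  · show (Wmat r V)ᴴ = Wmat r V
    funext i j
    simp only [conjTranspose_apply, Wmat, star_trivial]
    have hVs : V j i = V i j := by
      have := congrFun (congrFun hsym i) j
      simpa [Matrix.transpose_apply] using this
    by_cases h : r ≤ (i : ℕ) ∧ r ≤ (j : ℕ)
    · rw [if_pos ⟨h.2, h.1⟩, if_pos h, hVs]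
    · rw [if_neg (fun hc => h ⟨hc.2, hc.1⟩), if_neg h]
  · intro x
    simp only [star_trivial]
    rw [Wmat_mulVec, dot_lowv]
    exact hlow (lowv r x) (fun i hi => lowv_apply_low x hi)

lemma exists_factor {S L : Matrix (Fin n) (Fin n) ℝ}
    (hker : ∀ x : Fin n → ℝ, S *ᵥ x = 0 → L *ᵥ x = 0) :
    ∃ M : Matrix (Fin n) (Fin n) ℝ, L = M * S := by
  set f : (Fin n → ℝ) →ₗ[ℝ] (Fin n → ℝ) := Matrix.toLin' S with hf
  set g : (Fin n → ℝ) →ₗ[ℝ] (Fin n → ℝ) := Matrix.toLin' L with hg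
  obtain ⟨π, hπ⟩ := (LinearMap.range f).subtype.exists_leftInverse_of_injective
    (Submodule.ker_subtype _)
  obtain ⟨s, hs⟩ := f.rangeRestrict.exists_rightInverse_of_surjective
    (LinearMap.range_rangeRestrict f)
  set h : (Fin n → ℝ) →ₗ[ℝ] (Fin n → ℝ) := g ∘ₗ s ∘ₗ π with hh
  refine ⟨LinearMap.toMatrix' h, ?_⟩
  have key : ∀ x : Fin n → ℝ, h (f x) = g x := by
    intro x
    have h1 : π (f x) = ⟨f x, LinearMap.mem_range_self f x⟩ := by
      have := congrFun (congrArg (fun m => m.toFun) hπ) ⟨f x, LinearMap.mem_range_self f x⟩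
      simpa using this
    have h2 : f (s ⟨f x, LinearMap.mem_range_self f x⟩) = f x := by
      have := congrFun (congrArg (fun m => m.toFun) hs) ⟨f x, LinearMap.mem_range_self f x⟩
      have h3 : f.rangeRestrict (s ⟨f x, LinearMap.mem_range_self f x⟩)
          = ⟨f x, LinearMap.mem_range_self f x⟩ := by exact this
      exact congrArg Subtype.val h3
    have h4 : f (s ⟨f x, LinearMap.mem_range_self f x⟩ - x) = 0 := by
      rw [map_sub, h2, sub_self]
    have h5 : g (s ⟨f x, LinearMap.mem_range_self f x⟩ - x) = 0 := by
      have := hker (s ⟨f x, LinearMap.mem_range_self f x⟩ - x) (by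
        simpa [hf, Matrix.toLin'_apply] using h4)
      simpa [hg, Matrix.toLin'_apply] using this
    have h6 : g (s ⟨f x, LinearMap.mem_range_self f x⟩) = g x := by
      have h7 : g (s ⟨f x, LinearMap.mem_range_self f x⟩) - g x = 0 := by
        rw [← map_sub]; exact h5
      exact sub_eq_zero.mp h7
    simp only [hh, LinearMap.comp_apply, h1, h6]
  apply Matrix.toLin'.injective
  rw [Matrix.toLin'_mul, Matrix.toLin'_toMatrix']
  refine LinearMap.ext fun x => ?_
  exact (key x).symm




lemma upv_upv (r : ℕ) (x : Fin n → ℝ) : upv r (upv r x) = upv r x := by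
  funext i; simp only [upv]; split <;> simp_all

lemma vecMul_symm {V : Matrix (Fin n) (Fin n) ℝ} (hsym : V.IsSymm) (x : Fin n → ℝ) :
    x ᵥ* V = V *ᵥ x := by
  conv_lhs => rw [← hsym]
  exact vecMul_transpose V x

lemma dot_mulVec_symm {V : Matrix (Fin n) (Fin n) ℝ} (hsym : V.IsSymm) (x y : Fin n → ℝ) :
    x ⬝ᵥ (V *ᵥ y) = y ⬝ᵥ (V *ᵥ x) := by
  rw [dotProduct_mulVec, vecMul_symm hsym, dotProduct_comm]

lemma abs_quad_le (V : Matrix (Fin n) (Fin n) ℝ) (a : Fin n → ℝ) :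
    |a ⬝ᵥ (V *ᵥ a)| ≤ (∑ i, ∑ j, |V i j|) * (a ⬝ᵥ a) := by
  have hself : ∀ i : Fin n, (a i)^2 ≤ a ⬝ᵥ a := by
    intro i
    have : ∀ k : Fin n, 0 ≤ a k * a k := fun k => mul_self_nonneg _
    calc (a i)^2 = a i * a i := sq (a i)
    _ ≤ ∑ k, a k * a k := Finset.single_le_sum (fun k _ => this k) (Finset.mem_univ i)
    _ = a ⬝ᵥ a := rfl
  have hpair : ∀ i j : Fin n, |a i * a j| ≤ a ⬝ᵥ a := by
    intro i j
    have h1 := hself i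
    have h2 := hself j
    have habs : |a i * a j| ≤ ((a i)^2 + (a j)^2)/2 := by
      rw [abs_mul]
      nlinarith [sq_nonneg (|a i| - |a j|), sq_abs (a i), sq_abs (a j)]
    linarith
  calc |a ⬝ᵥ (V *ᵥ a)| = |∑ i, a i * ∑ j, V i j * a j| := rfl
    _ ≤ ∑ i, |a i * ∑ j, V i j * a j| := Finset.abs_sum_le_sum_abs _ _
    _ ≤ ∑ i, ∑ j, |V i j| * |a i * a j| := by
        apply Finset.sum_le_sum
        intro i _
        calc |a i * ∑ j, V i j * a j| = |∑ j, a i * (V i j * a j)| := by rw [Finset.mul_sum]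
          _ ≤ ∑ j, |a i * (V i j * a j)| := Finset.abs_sum_le_sum_abs _ _
          _ = ∑ j, |V i j| * |a i * a j| := by
              apply Finset.sum_congr rfl
              intro j _
              rw [← abs_mul]
              congr 1
              ring
    _ ≤ ∑ i, ∑ j, |V i j| * (a ⬝ᵥ a) := by
        apply Finset.sum_le_sum
        intro i _
        apply Finset.sum_le_sum
        intro j _
        exact mul_le_mul_of_nonneg_left (hpair i j) (abs_nonneg _)
    _ = (∑ i, ∑ j, |V i j|) * (a ⬝ᵥ a) := by
        rw [Finset.sum_mul]
        exact Finset.sum_congr rfl fun i _ => (Finset.sum_mul _ _ _).symm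

lemma mulVec_sq_bound (M S : Matrix (Fin n) (Fin n) ℝ) (x : Fin n → ℝ) :
    ((M * S) *ᵥ x) ⬝ᵥ ((M * S) *ᵥ x)
      ≤ (∑ i, ∑ j, (M i j)^2) * ((S *ᵥ x) ⬝ᵥ (S *ᵥ x)) := by
  rw [← mulVec_mulVec]
  set y := S *ᵥ x with hy
  calc (M *ᵥ y) ⬝ᵥ (M *ᵥ y) = ∑ i, (∑ j, M i j * y j)^2 := by
        simp only [dotProduct, mulVec, sq]
    _ ≤ ∑ i, (∑ j, (M i j)^2) * (∑ j, (y j)^2) := by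
        apply Finset.sum_le_sum
        intro i _
        exact Finset.sum_mul_sq_le_sq_mul_sq _ _ _
    _ = (∑ i, ∑ j, (M i j)^2) * ((S *ᵥ x) ⬝ᵥ (S *ᵥ x)) := by
        rw [Finset.sum_mul]
        apply Finset.sum_congr rfl
        intro i _
        congr 1
        unfold dotProduct
        apply Finset.sum_congr rfl
        intro j _
        rw [sq, hy]




lemma mem_dir_of_kernel {V : Matrix (Fin n) (Fin n) ℝ} (hsym : V.IsSymm)
    (hlow : ∀ x : Fin n → ℝ, (∀ i : Fin n, (i : ℕ) < r → x i = 0) → 0 ≤ x ⬝ᵥ (V *ᵥ x))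
    (hK : ∀ x : Fin n → ℝ, Wmat r V *ᵥ x = 0 → Lmat r V *ᵥ x = 0) :
    V ∈ dirMat (ZMat n r) (PSDCone n) := by
  have hW : (Wmat r V).PosSemidef := Wmat_posSemidef hsym hlow
  obtain ⟨S, hSsymm, hSS⟩ : ∃ S : Matrix (Fin n) (Fin n) ℝ,
      S.IsSymm ∧ S * S = Wmat r V := by
    open scoped MatrixOrder in
    refine ⟨CFC.sqrt (Wmat r V), ?_, CFC.sqrt_mul_sqrt_self _ hW.nonneg⟩
    open scoped MatrixOrder in
    have h := (CFC.sqrt_nonneg (Wmat r V)).posSemidef.1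
    show (CFC.sqrt (Wmat r V))ᵀ = CFC.sqrt (Wmat r V)
    apply Matrix.ext
    intro i j
    have := congrFun (congrFun h i) j
    simpa [conjTranspose_apply, star_trivial, Matrix.transpose_apply] using this
  have hkerS : ∀ x : Fin n → ℝ, S *ᵥ x = 0 → Lmat r V *ᵥ x = 0 := by
    intro x hx
    apply hK
    rw [← hSS, ← mulVec_mulVec, hx, mulVec_zero]
  obtain ⟨M, hM⟩ := exists_factor hkerS
  set C : ℝ := ∑ i, ∑ j, (M i j)^2 with hCdef
  have hC0 : 0 ≤ C := Finset.sum_nonneg fun i _ =>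
    Finset.sum_nonneg fun j _ => sq_nonneg _
  -- S *ᵥ x self-dot equals quadratic form of W
  have hSq : ∀ x : Fin n → ℝ, (S *ᵥ x) ⬝ᵥ (S *ᵥ x) = x ⬝ᵥ (Wmat r V *ᵥ x) := by
    intro x
    rw [← hSS, ← mulVec_mulVec]
    rw [dot_mulVec_symm hSsymm x (S *ᵥ x)]
  have hLbound : ∀ x : Fin n → ℝ,
      (Lmat r V *ᵥ x) ⬝ᵥ (Lmat r V *ᵥ x) ≤ C * (x ⬝ᵥ (Wmat r V *ᵥ x)) := by
    intro x
    rw [hM, ← hSq]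
    exact mulVec_sq_bound M S x
  set A : ℝ := ∑ i, ∑ j, |V i j| with hAdef
  have hA0 : 0 ≤ A := Finset.sum_nonneg fun i _ =>
    Finset.sum_nonneg fun j _ => abs_nonneg _
  set ε : ℝ := min (1/(2*(A+1))) (1/(2*(C+1))) with hεdef
  have hε : 0 < ε :=
    lt_min (one_div_pos.mpr (by linarith)) (one_div_pos.mpr (by linarith))
  have hεA : ε * A ≤ 1/2 := by
    have h1 : ε ≤ 1/(2*(A+1)) := min_le_left _ _
    have h2 : ε * A ≤ (1/(2*(A+1))) * A :=
      mul_le_mul_of_nonneg_right h1 hA0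
    have h3 : (1/(2*(A+1))) * A ≤ 1/2 := by
      rw [div_mul_eq_mul_div, one_mul,
        div_le_div_iff₀ (by linarith : (0:ℝ) < 2*(A+1)) (by norm_num : (0:ℝ) < 2)]
      nlinarith
    linarith
  have hεC : 2 * ε * C ≤ 1 := by
    have h1 : ε ≤ 1/(2*(C+1)) := min_le_right _ _
    have h2 : ε * C ≤ (1/(2*(C+1))) * C :=
      mul_le_mul_of_nonneg_right h1 hC0
    have h3 : (1/(2*(C+1))) * C ≤ 1/2 := by
      rw [div_mul_eq_mul_div, one_mul,
        div_le_div_iff₀ (by linarith : (0:ℝ) < 2*(C+1)) (by norm_num : (0:ℝ) < 2)]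
      nlinarith
    linarith
  refine ⟨ε, hε, Matrix.PosSemidef.of_dotProduct_mulVec_nonneg ?_ ?_⟩
  · -- Hermitian
    show (ZMat n r + ε • V)ᴴ = ZMat n r + ε • V
    funext i j
    simp only [conjTranspose_apply, star_trivial, Matrix.add_apply, Matrix.smul_apply,
      smul_eq_mul]
    have hZ : ZMat n r j i = ZMat n r i j := by
      have := congrFun (congrFun (ZMat_transpose n r) i) j
      simpa [Matrix.transpose_apply] using this
    have hVs : V j i = V i j := by
      have := congrFun (congrFun hsym i) j
      simpa [Matrix.transpose_apply] using this
    rw [hZ, hVs]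
  · -- PSD quadratic form
    intro x
    simp only [star_trivial]
    set a : Fin n → ℝ := upv r x with hadef
    set b : Fin n → ℝ := lowv r x with hbdef
    have hZx : x ⬝ᵥ (ZMat n r *ᵥ x) = a ⬝ᵥ a := by
      show x ⬝ᵥ ((fun i j => if i = j ∧ (i : ℕ) < r then (1:ℝ) else 0 :
        Matrix (Fin n) (Fin n) ℝ) *ᵥ x) = a ⬝ᵥ a
      rw [ZMat_mulVec]
      calc x ⬝ᵥ upv r x = x ⬝ᵥ upv r (upv r x) := by rw [upv_upv]
        _ = upv r x ⬝ᵥ upv r x := dot_upv x (upv r x)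
    have hba : b ⬝ᵥ (V *ᵥ a) = a ⬝ᵥ (V *ᵥ b) := dot_mulVec_symm hsym b a
    have expand : x ⬝ᵥ (V *ᵥ x)
        = a ⬝ᵥ (V *ᵥ a) + 2*(a ⬝ᵥ (V *ᵥ b)) + b ⬝ᵥ (V *ᵥ b) := by
      conv_lhs => rw [← upv_add_lowv r x]
      rw [mulVec_add, dotProduct_add, add_dotProduct, add_dotProduct, hba]
      ring
    have hupa : upv r a = a := by rw [hadef]; exact upv_upv r x
    have hlob : lowv r b = b := by rw [hbdef]; exact lowv_lowv r x
    have hab : a ⬝ᵥ (V *ᵥ b) = a ⬝ᵥ (Lmat r V *ᵥ b) := by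
      rw [Lmat_mulVec, hlob, dot_upv, hupa]
    have hbbW : b ⬝ᵥ (V *ᵥ b) = b ⬝ᵥ (Wmat r V *ᵥ b) := by
      rw [Wmat_mulVec, hlob, dot_lowv, hlob]
    have hbbnn : 0 ≤ b ⬝ᵥ (Wmat r V *ᵥ b) := by
      rw [← hbbW]
      exact hlow b (fun i hi => lowv_apply_low x hi)
    have haa : 0 ≤ a ⬝ᵥ a := by
      unfold dotProduct
      exact Finset.sum_nonneg fun i _ => mul_self_nonneg _
    have hqaa : |a ⬝ᵥ (V *ᵥ a)| ≤ A * (a ⬝ᵥ a) := abs_quad_le V a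
    set Lb : Fin n → ℝ := Lmat r V *ᵥ b with hLbdef
    have hLb : Lb ⬝ᵥ Lb ≤ C * (b ⬝ᵥ (Wmat r V *ᵥ b)) := hLbound b
    -- cross term bound: 0 ≤ (a + (2ε)•Lb) ⬝ᵥ (a + (2ε)•Lb)
    have hcross : 0 ≤ a ⬝ᵥ a + 4*ε*(a ⬝ᵥ Lb) + 4*ε^2*(Lb ⬝ᵥ Lb) := by
      have h0 : 0 ≤ (a + (2*ε) • Lb) ⬝ᵥ (a + (2*ε) • Lb) := by
        unfold dotProduct
        exact Finset.sum_nonneg fun i _ => mul_self_nonneg _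
      have hexp : (a + (2*ε) • Lb) ⬝ᵥ (a + (2*ε) • Lb)
          = a ⬝ᵥ a + 4*ε*(a ⬝ᵥ Lb) + 4*ε^2*(Lb ⬝ᵥ Lb) := by
        simp only [dotProduct_add, add_dotProduct, smul_dotProduct, dotProduct_smul,
          smul_eq_mul, dotProduct_comm Lb a]
        ring
      rw [hexp] at h0
      exact h0
    -- main computation
    have hmain : x ⬝ᵥ ((ZMat n r + ε • V) *ᵥ x)
        = a ⬝ᵥ a + ε * (a ⬝ᵥ (V *ᵥ a) + 2*(a ⬝ᵥ Lb) + b ⬝ᵥ (Wmat r V *ᵥ b)) := by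
      rw [add_mulVec, dotProduct_add, hZx, smul_mulVec, dotProduct_smul,
        smul_eq_mul, expand, hab, hbbW]
    rw [hmain]
    nlinarith [mul_nonneg hε.le hbbnn, mul_nonneg (mul_nonneg hε.le hε.le) hbbnn,
      mul_nonneg hε.le (mul_nonneg hε.le
        (Finset.sum_nonneg fun i _ => mul_self_nonneg (Lb i) : 0 ≤ Lb ⬝ᵥ Lb)),
      mul_le_mul_of_nonneg_left hLb (mul_nonneg hε.le hε.le),
      abs_le.mp hqaa, mul_le_mul_of_nonneg_right hεA haa,
      mul_le_mul_of_nonneg_right hεC (mul_nonneg hε.le hbbnn),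
      mul_le_mul_of_nonneg_left (abs_le.mp hqaa).1 hε.le]




lemma vecMulVec_mulVec' (a b y : Fin n → ℝ) :
    vecMulVec a b *ᵥ y = (b ⬝ᵥ y) • a := by
  funext i
  simp only [mulVec, dotProduct, vecMulVec_apply, Pi.smul_apply, smul_eq_mul]
  rw [Finset.sum_mul]
  apply Finset.sum_congr rfl
  intro k _
  ring

lemma vecMulVec_mul' (a b c d : Fin n → ℝ) :
    vecMulVec a b * vecMulVec c d = (b ⬝ᵥ c) • vecMulVec a d := by
  apply Matrix.ext
  intro i j
  simp only [Matrix.mul_apply, vecMulVec_apply, Matrix.smul_apply, smul_eq_mul, dotProduct]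
  rw [Finset.sum_mul]
  apply Finset.sum_congr rfl
  intro k _
  ring

lemma vecMulVec_transp (a b : Fin n → ℝ) : (vecMulVec a b)ᵀ = vecMulVec b a := by
  apply Matrix.ext
  intro i j
  simp [vecMulVec_apply, Matrix.transpose_apply, mul_comm]

/-- Householder coefficient -/
def hcoef (v : Fin n → ℝ) : ℝ := if v = 0 then 0 else 2 / (v ⬝ᵥ v)

lemma hcoef_key (v : Fin n → ℝ) :
    (hcoef v * hcoef v * (v ⬝ᵥ v)) • vecMulVec v v = (2 * hcoef v) • vecMulVec v v := by
  by_cases hv : v = 0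
  · simp [hcoef, hv]
  · have hvv : v ⬝ᵥ v ≠ 0 := fun h => hv (dotProduct_self_eq_zero.mp h)
    congr 1
    simp only [hcoef, if_neg hv]
    field_simp

lemma GG_eq_one (v v' : Fin n → ℝ) (hvv' : v ⬝ᵥ v' = 0) :
    (1 - hcoef v • vecMulVec v v - hcoef v' • vecMulVec v' v') *
      (1 - hcoef v • vecMulVec v v - hcoef v' • vecMulVec v' v') = 1 := by
  have hv'v : v' ⬝ᵥ v = 0 := by rw [dotProduct_comm]; exact hvv'
  have hAB : vecMulVec v v * vecMulVec v' v' = 0 := by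
    rw [vecMulVec_mul', hvv', zero_smul]
  have hBA : vecMulVec v' v' * vecMulVec v v = 0 := by
    rw [vecMulVec_mul', hv'v, zero_smul]
  have hAA : (hcoef v * hcoef v) • (vecMulVec v v * vecMulVec v v)
      = (2 * hcoef v) • vecMulVec v v := by
    rw [vecMulVec_mul', smul_smul, hcoef_key]
  have hBB : (hcoef v' * hcoef v') • (vecMulVec v' v' * vecMulVec v' v')
      = (2 * hcoef v') • vecMulVec v' v' := by
    rw [vecMulVec_mul', smul_smul, hcoef_key]
  have expand : (1 - hcoef v • vecMulVec v v - hcoef v' • vecMulVec v' v') *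
        (1 - hcoef v • vecMulVec v v - hcoef v' • vecMulVec v' v')
      = 1 - (2*hcoef v) • vecMulVec v v - (2*hcoef v') • vecMulVec v' v'
        + (hcoef v*hcoef v) • (vecMulVec v v*vecMulVec v v)
        + (hcoef v*hcoef v') • (vecMulVec v v*vecMulVec v' v')
        + (hcoef v'*hcoef v) • (vecMulVec v' v'*vecMulVec v v)
        + (hcoef v'*hcoef v') • (vecMulVec v' v'*vecMulVec v' v') := by
    simp only [Matrix.sub_mul, Matrix.mul_sub, Matrix.one_mul, Matrix.mul_one,
      Matrix.smul_mul, Matrix.mul_smul, smul_smul]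
    module
  rw [expand, hAA, hBB, hAB, hBA, smul_zero, smul_zero]
  module

lemma reflect1 {z e : Fin n → ℝ} (hz : z ⬝ᵥ z = 1) (he : e ⬝ᵥ e = 1) :
    z - (hcoef (z - e) * ((z - e) ⬝ᵥ z)) • (z - e) = e := by
  by_cases hv : z - e = 0
  · simp only [hcoef, if_pos hv, zero_mul, zero_smul, sub_zero]
    exact sub_eq_zero.mp hv
  · have hez : (z - e) ⬝ᵥ (z - e) = 2 - 2 * (e ⬝ᵥ z) := by
      simp only [sub_dotProduct, dotProduct_sub, hz, he, dotProduct_comm z e]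
      ring
    have hvv : (z - e) ⬝ᵥ (z - e) ≠ 0 := fun h => hv (dotProduct_self_eq_zero.mp h)
    have hne1 : e ⬝ᵥ z ≠ 1 := by
      intro h1
      apply hvv
      rw [hez, h1]; ring
    have hvz : (z - e) ⬝ᵥ z = 1 - e ⬝ᵥ z := by
      simp only [sub_dotProduct, hz]
    have h2 : 2 - 2*(e ⬝ᵥ z) ≠ 0 := by rw [← hez]; exact hvv
    have hc : hcoef (z - e) * ((z - e) ⬝ᵥ z) = 1 := by
      simp only [hcoef, if_neg hv, hez, hvz]
      field_simp
    rw [hc, one_smul]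
    abel

lemma reflect2 {z e : Fin n → ℝ} (hz : z ⬝ᵥ z = 1) (he : e ⬝ᵥ e = 1) :
    e - (hcoef (z - e) * ((z - e) ⬝ᵥ e)) • (z - e) = z := by
  by_cases hv : z - e = 0
  · simp only [hcoef, if_pos hv, zero_mul, zero_smul, sub_zero]
    exact (sub_eq_zero.mp hv).symm
  · have hez : (z - e) ⬝ᵥ (z - e) = 2 - 2 * (e ⬝ᵥ z) := by
      simp only [sub_dotProduct, dotProduct_sub, hz, he, dotProduct_comm z e]
      ring
    have hvv : (z - e) ⬝ᵥ (z - e) ≠ 0 := fun h => hv (dotProduct_self_eq_zero.mp h)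
    have hne1 : e ⬝ᵥ z ≠ 1 := by
      intro h1
      apply hvv
      rw [hez, h1]; ring
    have hve : (z - e) ⬝ᵥ e = e ⬝ᵥ z - 1 := by
      simp only [sub_dotProduct, he, dotProduct_comm z e]
    have h2 : 2 - 2*(e ⬝ᵥ z) ≠ 0 := by rw [← hez]; exact hvv
    have hc : hcoef (z - e) * ((z - e) ⬝ᵥ e) = -1 := by
      simp only [hcoef, if_neg hv, hez, hve]
      field_simp
      ring
    rw [hc]
    simp only [neg_smul, one_smul, sub_neg_eq_add]
    abel

lemma G_mulVec (c c' : ℝ) (v v' y : Fin n → ℝ) :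
    (1 - c • vecMulVec v v - c' • vecMulVec v' v') *ᵥ y
      = y - (c * (v ⬝ᵥ y)) • v - (c' * (v' ⬝ᵥ y)) • v' := by
  rw [sub_mulVec, sub_mulVec, one_mulVec, smul_mulVec, smul_mulVec,
    vecMulVec_mulVec', vecMulVec_mulVec', smul_smul, smul_smul]

lemma dot_coord (k : Fin n) (y : Fin n → ℝ) :
    (fun i : Fin n => if (i : ℕ) = (k : ℕ) then (1:ℝ) else 0) ⬝ᵥ y = y k := by
  unfold dotProduct
  rw [Finset.sum_eq_single k]
  · simp
  · intro b _ hb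
    simp [Fin.val_eq_val, hb]
  · simp

lemma coord_dot (k : Fin n) (y : Fin n → ℝ) :
    y ⬝ᵥ (fun i : Fin n => if (i : ℕ) = (k : ℕ) then (1:ℝ) else 0) = y k := by
  rw [dotProduct_comm]
  exact dot_coord k y

lemma dot_disjoint {x y : Fin n → ℝ} (hx : ∀ i : Fin n, r ≤ (i : ℕ) → x i = 0)
    (hy : ∀ i : Fin n, (i : ℕ) < r → y i = 0) : x ⬝ᵥ y = 0 := by
  unfold dotProduct
  apply Finset.sum_eq_zero
  intro i _
  by_cases h : (i : ℕ) < r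
  · rw [hy i h, mul_zero]
  · rw [hx i (Nat.le_of_not_lt h), zero_mul]

lemma triple_entry (A B : Matrix (Fin n) (Fin n) ℝ) (i j : Fin n) :
    (Aᵀ * B * A) i j = (fun k => A k i) ⬝ᵥ (B *ᵥ fun k => A k j) := by
  simp only [Matrix.mul_apply, Matrix.transpose_apply, dotProduct, mulVec,
    Finset.sum_mul, Finset.mul_sum]
  rw [Finset.sum_comm]
  apply Finset.sum_congr rfl
  intro k _
  apply Finset.sum_congr rfl
  intro l _
  ring

lemma quad_conj (A B : Matrix (Fin n) (Fin n) ℝ) (x : Fin n → ℝ) :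
    x ⬝ᵥ ((Aᵀ * B * A) *ᵥ x) = (A *ᵥ x) ⬝ᵥ (B *ᵥ (A *ᵥ x)) := by
  rw [← mulVec_mulVec, ← mulVec_mulVec, dotProduct_mulVec x Aᵀ, vecMul_transpose]




lemma dot_coordm {m : ℕ} (k : Fin n) (hk : (k : ℕ) = m) (y : Fin n → ℝ) :
    (fun i : Fin n => if (i : ℕ) = m then (1:ℝ) else 0) ⬝ᵥ y = y k := by
  subst hk; exact dot_coord k y

lemma coordm_dot {m : ℕ} (k : Fin n) (hk : (k : ℕ) = m) (y : Fin n → ℝ) :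
    y ⬝ᵥ (fun i : Fin n => if (i : ℕ) = m then (1:ℝ) else 0) = y k := by
  subst hk; exact coord_dot k y

lemma conj_isSymm (A B : Matrix (Fin n) (Fin n) ℝ) (hB : B.IsSymm) :
    (Aᵀ * B * A).IsSymm := by
  show (Aᵀ * B * A)ᵀ = Aᵀ * B * A
  rw [Matrix.transpose_mul, Matrix.transpose_mul, Matrix.transpose_transpose, hB,
    Matrix.mul_assoc]

end FrontierAux

open FrontierAux

/-- for `Z = I_r ⊕ 0`, every
`V ∈ cl dir(Z, S^n₊) \ dir(Z, S^n₊)` can be brought, by a rotation `T = Q ⊕ P` with `Q`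
orthogonal and `P` invertible, to the form
`[[V₁₁, e₁, *], [e₁ᵀ, 0, 0], [*, 0, V₃₃]]` with `V₃₃ ⪰ 0`. -/
theorem frontier_dir_psd_normal_form {n r : ℕ}
    (V : Matrix (Fin n) (Fin n) ℝ)
    (hV : V ∈ closure (dirMat (ZMat n r) (PSDCone n)) \ dirMat (ZMat n r) (PSDCone n)) :
    ∃ T : Matrix (Fin n) (Fin n) ℝ, BlockRotation r T ∧ VForm r (Tᵀ * V * T) := by
  classical
  obtain ⟨hVc, hVnd⟩ := hV
  have hsym : V.IsSymm := isSymm_of_mem_closure hVc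
  have hlow := low_psd_of_mem_closure hVc
  obtain ⟨x0, hW0, hL0⟩ : ∃ x, Wmat r V *ᵥ x = 0 ∧ Lmat r V *ᵥ x ≠ 0 := by
    by_contra h
    push_neg at h
    exact hVnd (mem_dir_of_kernel hsym hlow h)
  set u : Fin n → ℝ := lowv r x0 with hu
  have hlu : lowv r u = u := by rw [hu]; exact lowv_lowv r x0
  have hWu : Wmat r V *ᵥ u = 0 := by
    rw [Wmat_mulVec, hlu, hu, ← Wmat_mulVec]
    exact hW0
  set w : Fin n → ℝ := Lmat r V *ᵥ u with hwdef
  have hwne : w ≠ 0 := by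
    rw [hwdef, Lmat_mulVec, hlu, hu, ← Lmat_mulVec]
    exact hL0
  have hu_low : ∀ i : Fin n, (i : ℕ) < r → u i = 0 := by
    intro i hi; rw [hu]; exact lowv_apply_low x0 hi
  have hw_up : ∀ i : Fin n, r ≤ (i : ℕ) → w i = 0 := by
    intro i hi; rw [hwdef, Lmat_mulVec]; exact upv_apply_high _ hi
  have hVu : V *ᵥ u = w := by
    funext i
    by_cases hi : (i : ℕ) < r
    · rw [hwdef, Lmat_mulVec, hlu]
      simp [upv, hi]
    · have h2 := congrFun hWu i
      rw [Wmat_mulVec, hlu] at h2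
      have h3 : lowv r (V *ᵥ u) i = (V *ᵥ u) i := by
        simp [lowv, Nat.le_of_not_lt hi]
      rw [h3] at h2
      rw [h2, hw_up i (Nat.le_of_not_lt hi)]
      rfl
  have hune : u ≠ 0 := by
    intro h0; apply hwne; rw [← hVu, h0, mulVec_zero]
  have hr0 : 0 < r := by
    by_contra h
    push_neg at h
    apply hwne; funext i
    exact hw_up i (le_trans h (Nat.zero_le _))
  have hrn : r < n := by
    obtain ⟨i, hi⟩ := Function.ne_iff.mp hune
    have h1 : ¬ (i : ℕ) < r := fun hlt => hi (hu_low i hlt)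
    exact lt_of_le_of_lt (Nat.le_of_not_lt h1) i.isLt
  -- normalizations
  have hww : 0 < w ⬝ᵥ w := by
    refine lt_of_le_of_ne (Finset.sum_nonneg fun i _ => mul_self_nonneg _) ?_
    exact Ne.symm (fun h => hwne (dotProduct_self_eq_zero.mp h))
  have huu : 0 < u ⬝ᵥ u := by
    refine lt_of_le_of_ne (Finset.sum_nonneg fun i _ => mul_self_nonneg _) ?_
    exact Ne.symm (fun h => hune (dotProduct_self_eq_zero.mp h))
  set nw : ℝ := Real.sqrt (w ⬝ᵥ w) with hnwdef
  set nu : ℝ := Real.sqrt (u ⬝ᵥ u) with hnudef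
  have hnw : 0 < nw := Real.sqrt_pos.mpr hww
  have hnu : 0 < nu := Real.sqrt_pos.mpr huu
  have hnw2 : nw * nw = w ⬝ᵥ w := Real.mul_self_sqrt hww.le
  have hnu2 : nu * nu = u ⬝ᵥ u := Real.mul_self_sqrt huu.le
  set what : Fin n → ℝ := nw⁻¹ • w with hwhatdef
  set uhat : Fin n → ℝ := nu⁻¹ • u with huhatdef
  have hwhat1 : what ⬝ᵥ what = 1 := by
    rw [hwhatdef, smul_dotProduct, dotProduct_smul, smul_eq_mul, smul_eq_mul, ← hnw2]
    field_simp
  have huhat1 : uhat ⬝ᵥ uhat = 1 := by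
    rw [huhatdef, smul_dotProduct, dotProduct_smul, smul_eq_mul, smul_eq_mul, ← hnu2]
    field_simp
  have hwhat_up : ∀ i : Fin n, r ≤ (i : ℕ) → what i = 0 := by
    intro i hi
    rw [hwhatdef]
    simp [hw_up i hi]
  have huhat_low : ∀ i : Fin n, (i : ℕ) < r → uhat i = 0 := by
    intro i hi
    rw [huhatdef]
    simp [hu_low i hi]
  -- basis vectors
  set e0 : Fin n → ℝ := fun i => if (i : ℕ) = 0 then 1 else 0 with he0def
  set er : Fin n → ℝ := fun i => if (i : ℕ) = r then 1 else 0 with herdef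
  have hn0 : 0 < n := lt_trans hr0 hrn
  have he01 : e0 ⬝ᵥ e0 = 1 := by
    rw [he0def, dot_coordm (⟨0, hn0⟩ : Fin n) rfl]
    simp
  have her1 : er ⬝ᵥ er = 1 := by
    rw [herdef, dot_coordm (⟨r, hrn⟩ : Fin n) rfl]
    simp
  -- Householder vectors
  set v : Fin n → ℝ := what - e0 with hvdef
  set v' : Fin n → ℝ := uhat - er with hv'def
  have hv_up : ∀ i : Fin n, r ≤ (i : ℕ) → v i = 0 := by
    intro i hi
    rw [hvdef]
    have h1 : ¬ ((i : ℕ) = 0) := by omega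
    simp only [Pi.sub_apply, hwhat_up i hi, he0def]
    simp [h1]
  have hv'_low : ∀ i : Fin n, (i : ℕ) < r → v' i = 0 := by
    intro i hi
    rw [hv'def]
    have h1 : ¬ ((i : ℕ) = r) := by omega
    simp only [Pi.sub_apply, huhat_low i hi, herdef]
    simp [h1]
  have hvv' : v ⬝ᵥ v' = 0 := dot_disjoint hv_up hv'_low
  set G : Matrix (Fin n) (Fin n) ℝ :=
    1 - hcoef v • vecMulVec v v - hcoef v' • vecMulVec v' v' with hGdef
  have hGG : G * G = 1 := by rw [hGdef]; exact GG_eq_one v v' hvv'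
  have hGsym : Gᵀ = G := by
    rw [hGdef, transpose_sub, transpose_sub, transpose_one, transpose_smul, transpose_smul,
      vecMulVec_transp, vecMulVec_transp]
  have hgs : ∀ a b : Fin n, G a b = G b a := by
    intro a b
    have h := congrFun (congrFun hGsym a) b
    rw [Matrix.transpose_apply] at h
    exact h.symm
  have hGapp : ∀ i j : Fin n, G i j
      = (if i = j then (1:ℝ) else 0) - hcoef v * (v i * v j) - hcoef v' * (v' i * v' j) := by
    intro i j
    rw [hGdef]
    simp only [Matrix.sub_apply, Matrix.smul_apply, Matrix.one_apply, vecMulVec_apply,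
      smul_eq_mul]
  set d : Fin n → ℝ := fun j => if (j : ℕ) = r then nu/nw else 1 with hddef
  set T : Matrix (Fin n) (Fin n) ℝ := G * Matrix.diagonal d with hTdef
  have hTapp : ∀ i j : Fin n, T i j = G i j * d j := by
    intro i j
    rw [hTdef, Matrix.mul_diagonal]
  -- block structure
  have hblock : ∀ i j : Fin n,
      (((i : ℕ) < r ∧ r ≤ (j : ℕ)) ∨ ((j : ℕ) < r ∧ r ≤ (i : ℕ))) → T i j = 0 := by
    intro i j hij
    have hne : i ≠ j := by
      intro h; subst h
      rcases hij with ⟨h1, h2⟩ | ⟨h1, h2⟩ <;> omega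
    have hG0 : G i j = 0 := by
      rcases hij with ⟨hi, hj⟩ | ⟨hj, hi⟩
      · rw [hGapp, hv_up j hj, hv'_low i hi]
        simp [hne]
      · rw [hGapp, hv_up i hi, hv'_low j hj]
        simp [hne]
    rw [hTapp, hG0, zero_mul]
  -- invertibility
  have hdet : IsUnit T.det := by
    apply Matrix.isUnit_det_of_right_inverse
      (B := Matrix.diagonal (fun j : Fin n => if (j : ℕ) = r then nw/nu else 1) * G)
    rw [hTdef, Matrix.mul_assoc, ← Matrix.mul_assoc (Matrix.diagonal d),
      Matrix.diagonal_mul_diagonal]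
    have hone : (fun j : Fin n => d j * (if (j : ℕ) = r then nw/nu else 1))
        = fun _ => (1:ℝ) := by
      funext j
      rw [hddef]
      by_cases hj : (j : ℕ) = r
      · simp only [hj, if_pos rfl, if_true]
        field_simp
      · simp [hj]
    rw [hone, Matrix.diagonal_one, Matrix.one_mul, hGG]
  -- orthogonality
  have horth : ∀ j k : Fin n, (j : ℕ) < r → (k : ℕ) < r →
      (∑ i, T i j * T i k) = if j = k then (1:ℝ) else 0 := by
    intro j k hj hk
    have hdj : d j = 1 := by
      rw [hddef]; have : ¬ ((j : ℕ) = r) := by omega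
      simp [this]
    have hdk : d k = 1 := by
      rw [hddef]; have : ¬ ((k : ℕ) = r) := by omega
      simp [this]
    have hsum : (∑ i, T i j * T i k) = (G * G) j k := by
      rw [Matrix.mul_apply]
      apply Finset.sum_congr rfl
      intro i _
      rw [hTapp, hTapp, hdj, hdk, mul_one, mul_one, hgs i j]
    rw [hsum, hGG, Matrix.one_apply]
  -- the special column
  have hger : G *ᵥ er = uhat := by
    rw [hGdef, G_mulVec]
    have h1 : v ⬝ᵥ er = 0 := by
      rw [herdef, coordm_dot (⟨r, hrn⟩ : Fin n) rfl v]
      exact hv_up _ (le_refl r)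
    rw [h1, mul_zero, zero_smul, sub_zero, hv'def]
    exact reflect2 huhat1 her1
  have hgwhat : G *ᵥ what = e0 := by
    rw [hGdef, G_mulVec]
    have h1 : v' ⬝ᵥ what = 0 := by
      rw [dotProduct_comm]
      exact dot_disjoint hwhat_up hv'_low
    rw [h1, mul_zero, zero_smul, sub_zero, hvdef]
    exact reflect1 hwhat1 he01
  have hcol_r : (fun k => T k (⟨r, hrn⟩ : Fin n)) = nw⁻¹ • u := by
    funext k
    have hdjr : d (⟨r, hrn⟩ : Fin n) = nu/nw := by rw [hddef]; simp
    have hGkr : G k (⟨r, hrn⟩ : Fin n) = uhat k := by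
      have h2 : (fun j => G k j) ⬝ᵥ er = G k (⟨r, hrn⟩ : Fin n) := by
        rw [herdef]
        exact coordm_dot (⟨r, hrn⟩ : Fin n) rfl (fun j => G k j)
      have h3 : (G *ᵥ er) k = (fun j => G k j) ⬝ᵥ er := rfl
      rw [← h2, ← h3, hger]
    rw [hTapp, hdjr, hGkr, huhatdef]
    simp only [Pi.smul_apply, smul_eq_mul]
    field_simp
  have hVcolr : V *ᵥ (fun k => T k (⟨r, hrn⟩ : Fin n)) = what := by
    rw [hcol_r, mulVec_smul, hVu, hwhatdef]
  -- assemble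
  refine ⟨T, ⟨hdet, hblock, horth⟩, ?_, ?_, ?_, ?_⟩
  · -- symmetry
    exact conj_isSymm T V hsym
  · -- column r
    intro i j hi hj
    have hjjr : j = (⟨r, hrn⟩ : Fin n) := Fin.ext hj
    rw [hjjr, triple_entry, hVcolr]
    have hdi : d i = 1 := by
      rw [hddef]; have : ¬ ((i : ℕ) = r) := by omega
      simp [this]
    have hcoli : (fun k => T k i) = fun k => G k i := by
      funext k; rw [hTapp, hdi, mul_one]
    rw [hcoli]
    have hswap : (fun k => G k i) = fun k => G i k := by
      funext k; rw [hgs k i]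
    rw [hswap]
    have hfin : (fun k => G i k) ⬝ᵥ what = (G *ᵥ what) i := rfl
    rw [hfin, hgwhat, he0def]
  · -- row r
    intro i j hi hj
    have hijr : i = (⟨r, hrn⟩ : Fin n) := Fin.ext hi
    rw [hijr, triple_entry, hcol_r]
    rw [smul_dotProduct, smul_eq_mul]
    rw [dot_mulVec_symm hsym u _, hVu]
    have hzero : (fun k => T k j) ⬝ᵥ w = 0 := by
      rw [dotProduct_comm]
      refine dot_disjoint hw_up ?_
      intro k hk
      exact hblock k j (Or.inl ⟨hk, hj⟩)
    rw [hzero, mul_zero]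
  · -- lower-right block PSD
    intro x hx
    rw [quad_conj]
    apply hlow
    intro i hi
    show (∑ j, T i j * x j) = 0
    apply Finset.sum_eq_zero
    intro j _
    by_cases hj : (j : ℕ) ≤ r
    · rw [hx j hj, mul_zero]
    · rw [hblock i j (Or.inl ⟨hi, le_of_lt (Nat.lt_of_not_le hj)⟩), zero_mul]
end
end

section
/- Let C = Q^m be the second order cone in ℝ^m and w = (1, 1, 0, …, 0) ∈ C. Then cl dir(w, C) = {v ∈ ℝ^m : v₁ ≥ v₂}, and cl dir(w, C) \ dir(w, C) = {v ∈ ℝ^m : v₁ = v₂ and (v₃, …, v_m) ≠ 0}. -/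
noncomputable section

/-- Membership in the second order cone `Q^m = {x : x₁ ≥ √(x₂² + ⋯ + x_m²)}` (components
indexed from `0`). -/
def SOCMem {m : ℕ} (x : Fin m → ℝ) : Prop :=
  ∀ k : Fin m, (k : ℕ) = 0 →
    Real.sqrt (∑ l ∈ Finset.univ.filter (fun l : Fin m => (l : ℕ) ≠ 0), x l ^ 2) ≤ x k

/-- The set of feasible directions at `x` in `C ⊆ ℝ^m`. -/
def dirVec {m : ℕ} (x : Fin m → ℝ) (C : Set (Fin m → ℝ)) : Set (Fin m → ℝ) :=
  {v | ∃ ε : ℝ, 0 < ε ∧ x + ε • v ∈ C}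

lemma soc_sum_split {m : ℕ} (hm : 2 ≤ m) (x : Fin m → ℝ) :
    ∑ l ∈ Finset.univ.filter (fun l : Fin m => (l : ℕ) ≠ 0), x l ^ 2
      = x ⟨1, hm⟩ ^ 2
        + ∑ l ∈ Finset.univ.filter (fun l : Fin m => 2 ≤ (l : ℕ)), x l ^ 2 := by
  have h : Finset.univ.filter (fun l : Fin m => (l : ℕ) ≠ 0)
      = insert ⟨1, by omega⟩ (Finset.univ.filter (fun l : Fin m => 2 ≤ (l : ℕ))) := by
    ext l
    simp only [Finset.mem_filter, Finset.mem_univ, true_and, Finset.mem_insert, Fin.ext_iff]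
    omega
  rw [h, Finset.sum_insert (by simp)]

lemma socmem_iff {m : ℕ} (hm : 2 ≤ m) (x : Fin m → ℝ) :
    SOCMem x ↔ 0 ≤ x ⟨0, Nat.zero_lt_of_lt (a := 1) hm⟩ ∧
      x ⟨1, hm⟩ ^ 2 + ∑ l ∈ Finset.univ.filter (fun l : Fin m => 2 ≤ (l : ℕ)), x l ^ 2
        ≤ x ⟨0, Nat.zero_lt_of_lt (a := 1) hm⟩ ^ 2 := by
  have hs : (0:ℝ) ≤ ∑ l ∈ Finset.univ.filter (fun l : Fin m => (l : ℕ) ≠ 0), x l ^ 2 :=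
    Finset.sum_nonneg fun i _ => sq_nonneg _
  constructor
  · intro h
    have h0 := h ⟨0, by omega⟩ rfl
    have hx0 : 0 ≤ x ⟨0, by omega⟩ := le_trans (Real.sqrt_nonneg _) h0
    refine ⟨hx0, ?_⟩
    rw [← soc_sum_split hm]
    exact (Real.sqrt_le_left hx0).mp h0

  · rintro ⟨hx0, h⟩ k hk
    have hk' : k = ⟨0, by omega⟩ := Fin.ext hk
    rw [hk', Real.sqrt_le_left hx0, soc_sum_split hm]
    exact h

lemma mem_dir_iff {m : ℕ} (hm : 2 ≤ m) (w : Fin m → ℝ)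
    (hw : ∀ k : Fin m, w k = if (k : ℕ) ≤ 1 then 1 else 0) (v : Fin m → ℝ) :
    v ∈ dirVec w {x : Fin m → ℝ | SOCMem x} ↔
      (v ⟨1, hm⟩ < v ⟨0, Nat.zero_lt_of_lt (a := 1) hm⟩ ∨
        (v ⟨1, hm⟩ = v ⟨0, Nat.zero_lt_of_lt (a := 1) hm⟩ ∧ ∀ k : Fin m, 2 ≤ (k : ℕ) → v k = 0)) := by
  set a := v ⟨0, by omega⟩ with ha
  set b := v ⟨1, by omega⟩ with hb
  set s := ∑ l ∈ Finset.univ.filter (fun l : Fin m => 2 ≤ (l : ℕ)), v l ^ 2 with hsdef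
  have hs0 : 0 ≤ s := Finset.sum_nonneg fun i _ => sq_nonneg _
  have hw0 : w ⟨0, by omega⟩ = 1 := by rw [hw]; norm_num
  have hw1 : w ⟨1, by omega⟩ = 1 := by rw [hw]; norm_num
  -- key: membership of w + ε • v rewritten
  have key : ∀ ε : ℝ, (w + ε • v ∈ {x : Fin m → ℝ | SOCMem x} ↔
      (0 ≤ 1 + ε * a ∧ (1 + ε * b) ^ 2 + ε ^ 2 * s ≤ (1 + ε * a) ^ 2)) := by
    intro ε
    rw [Set.mem_setOf_eq, socmem_iff hm]
    have e0 : (w + ε • v) ⟨0, by omega⟩ = 1 + ε * a := by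
      simp [Pi.add_apply, Pi.smul_apply, hw0, smul_eq_mul, ha]
    have e1 : (w + ε • v) ⟨1, by omega⟩ = 1 + ε * b := by
      simp [Pi.add_apply, Pi.smul_apply, hw1, smul_eq_mul, hb]
    have esum : ∑ l ∈ Finset.univ.filter (fun l : Fin m => 2 ≤ (l : ℕ)), (w + ε • v) l ^ 2
        = ε ^ 2 * s := by
      rw [hsdef, Finset.mul_sum]
      refine Finset.sum_congr rfl fun l hl => ?_
      have hl2 : 2 ≤ (l : ℕ) := (Finset.mem_filter.mp hl).2
      have : w l = 0 := by rw [hw]; simp [Nat.not_le.mpr (by omega : 1 < (l:ℕ))]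
      simp [Pi.add_apply, Pi.smul_apply, this, smul_eq_mul]
      ring
    rw [e0, e1, esum]
  constructor
  · rintro ⟨ε, hε, hmem⟩
    obtain ⟨h1, h2⟩ := (key ε).mp hmem
    have hba : b ≤ a := by
      by_contra hc
      push_neg at hc
      have hpq : 1 + ε * a < 1 + ε * b := by
        have := mul_lt_mul_of_pos_left hc hε
        linarith
      nlinarith [mul_pos (sub_pos.mpr hpq) (by linarith : (0:ℝ) < (1 + ε * a) + (1 + ε * b)),
        mul_nonneg (sq_nonneg ε) hs0]
    rcases lt_or_eq_of_le hba with hlt | heq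
    · exact Or.inl hlt
    · refine Or.inr ⟨heq, ?_⟩
      rw [heq] at h2
      have hsle : s ≤ 0 := by nlinarith [mul_pos hε hε]
      have hs : s = 0 := le_antisymm hsle hs0
      intro k hk
      have := (Finset.sum_eq_zero_iff_of_nonneg (fun i _ => sq_nonneg (v i))).mp hs k
        (Finset.mem_filter.mpr ⟨Finset.mem_univ _, hk⟩)
      exact pow_eq_zero_iff (by norm_num) |>.mp this
  · rintro (hlt | ⟨heq, hzero⟩)
    · set D := a ^ 2 - b ^ 2 - s with hD
      set ε := min ((a - b) / (1 + |D|)) (1 / (1 + |a|)) with hε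
      have hab : 0 < a - b := sub_pos.mpr hlt
      have hεpos : 0 < ε := lt_min (div_pos hab (by positivity)) (by positivity)
      have hε1 : ε ≤ (a - b) / (1 + |D|) := min_le_left _ _
      have hε2 : ε ≤ 1 / (1 + |a|) := min_le_right _ _
      refine ⟨ε, hεpos, (key ε).mpr ⟨?_, ?_⟩⟩
      · have h1 : ε * |a| ≤ 1 := by
          calc ε * |a| ≤ (1 / (1 + |a|)) * |a| := by
                exact mul_le_mul_of_nonneg_right hε2 (abs_nonneg a)
            _ ≤ 1 := by
                rw [div_mul_eq_mul_div, one_mul, div_le_one (by positivity)]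
                linarith [abs_nonneg a]
        have h2 : -(ε * |a|) ≤ ε * a := by
          have := neg_abs_le a
          nlinarith [abs_nonneg a]
        linarith
      · have hεD : ε * |D| ≤ a - b := by
          calc ε * |D| ≤ ((a - b) / (1 + |D|)) * |D| := by
                exact mul_le_mul_of_nonneg_right hε1 (abs_nonneg D)
            _ ≤ a - b := by
                rw [div_mul_eq_mul_div, div_le_iff₀ (by positivity)]
                nlinarith [abs_nonneg D]
        have hεD2 : -(a - b) ≤ ε * D := by
          have := neg_abs_le D
          nlinarith [abs_nonneg D, hεpos.le]
        nlinarith [hεpos.le]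
    · have hs : s = 0 := Finset.sum_eq_zero fun l hl => by
        rw [hzero l (Finset.mem_filter.mp hl).2]; ring
      set ε := 1 / (1 + |a|) with hε
      have hεpos : 0 < ε := by positivity
      refine ⟨ε, hεpos, (key ε).mpr ⟨?_, ?_⟩⟩
      · have h1 : ε * |a| ≤ 1 := by
          rw [hε, div_mul_eq_mul_div, one_mul, div_le_one (by positivity)]
          linarith [abs_nonneg a]
        have h2 : -(ε * |a|) ≤ ε * a := by
          have := neg_abs_le a
          nlinarith [abs_nonneg a]
        linarith
      · exact le_of_eq (by rw [heq, hs]; ring)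

/-- for the second order cone `C = Q^m` and `w = (1, 1, 0, …, 0)`,
`cl dir(w, C) = {v : v₁ ≥ v₂}` and
`cl dir(w, C) \ dir(w, C) = {v : v₁ = v₂ and (v₃, …, v_m) ≠ 0}`. -/
theorem soc_dir_at_boundary_point {m : ℕ} (hm : 2 ≤ m)
    (w : Fin m → ℝ) (hw : ∀ k : Fin m, w k = if (k : ℕ) ≤ 1 then 1 else 0) :
    closure (dirVec w {x : Fin m → ℝ | SOCMem x}) =
      {v : Fin m → ℝ | v ⟨1, by omega⟩ ≤ v ⟨0, by omega⟩} ∧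
    closure (dirVec w {x : Fin m → ℝ | SOCMem x}) \
        dirVec w {x : Fin m → ℝ | SOCMem x} =
      {v : Fin m → ℝ | v ⟨0, by omega⟩ = v ⟨1, by omega⟩ ∧
        ∃ k : Fin m, 2 ≤ (k : ℕ) ∧ v k ≠ 0} := by
  have hdir := mem_dir_iff hm w hw
  have hcl : closure (dirVec w {x : Fin m → ℝ | SOCMem x}) =
      {v : Fin m → ℝ | v ⟨1, by omega⟩ ≤ v ⟨0, by omega⟩} := by
    apply le_antisymm
    · apply closure_minimal
      · intro v hv
        rcases (hdir v).mp hv with h | h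
        · exact le_of_lt h
        · exact le_of_eq h.1
      · exact isClosed_le (continuous_apply _) (continuous_apply _)
    · intro v hv
      set e : Fin m → ℝ := fun k => if k = ⟨0, by omega⟩ then 1 else 0 with he
      have htend : Filter.Tendsto (fun n : ℕ => v + (1 / (n + 1 : ℝ)) • e)
          Filter.atTop (nhds v) := by
        have h1 : Filter.Tendsto (fun n : ℕ => (1 / (n + 1 : ℝ)) • e)
            Filter.atTop (nhds ((0:ℝ) • e)) :=
          tendsto_one_div_add_atTop_nhds_zero_nat.smul_const e
        rw [zero_smul] at h1
        have := (tendsto_const_nhds (x := v) (f := Filter.atTop (α := ℕ))).add h1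
        rwa [add_zero] at this
      refine mem_closure_of_tendsto htend (Filter.Eventually.of_forall fun n => ?_)
      rw [hdir]
      left
      have h10 : (⟨1, by omega⟩ : Fin m) ≠ ⟨0, by omega⟩ := by
        simp [Fin.ext_iff]
      simp only [Pi.add_apply, Pi.smul_apply, he, smul_eq_mul]
      norm_num
      have : (0:ℝ) < ((n : ℝ) + 1)⁻¹ := by positivity
      have hv' : v ⟨1, by omega⟩ ≤ v ⟨0, by omega⟩ := hv
      linarith
  refine ⟨hcl, ?_⟩
  rw [hcl]
  ext v
  simp only [Set.mem_diff, Set.mem_setOf_eq, hdir v]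
  constructor
  · rintro ⟨hle, hnot⟩
    push_neg at hnot
    obtain ⟨hnlt, himp⟩ := hnot
    have heq : v ⟨1, by omega⟩ = v ⟨0, by omega⟩ := le_antisymm hle hnlt
    obtain ⟨k, hk, hvk⟩ := himp heq
    exact ⟨heq.symm, k, hk, hvk⟩
  · rintro ⟨heq, k, hk, hvk⟩
    refine ⟨le_of_eq heq.symm, ?_⟩
    rintro (hlt | ⟨-, hall⟩)
    · linarith [le_of_eq heq]
    · exact hvk (hall k hk)
end
end
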